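/- Let A be an n×n entrywise nonnegative matrix, n ≥ 2, and S a nonempty proper subset of indices. Then ρ(A) ≤ max{η₁, η₂, η₃, η₄}, where η₁ = max_{i∈S}(A i i + r_i^S(A)), η₂ = max_{i∈S̄}(A i i + r_i^{S̄}(A)), η₃ = max_{i∈S, j∈S̄} min{ (A i i + A j j + r_i^S(A) + r_j^{S̄}(A) + √((A i i - A j j + r_i^S(A) - r_j^{S̄}(A))² + 4 r_i^{S̄}(A) r_j^S(A)))/2 , R_i(A) }, and η₄ is the symmetric expression with S and S̄ swapped, assuming ρ(A) is an eigenvalue of A. -/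

import Mathlib

/-- `μ` is an eigenvalue (over `ℂ`) of the real matrix `A`. -/
def IsEigOfReal {n : ℕ} (A : Matrix (Fin n) (Fin n) ℝ) (μ : ℂ) : Prop :=
  ∃ v : Fin n → ℂ, v ≠ 0 ∧ (A.map (Complex.ofReal ·)).mulVec v = μ • v

/-- `r_i^T(A) = ∑_{j ∈ T, j ≠ i} A i j` for a nonnegative matrix. -/
def rT {n : ℕ} (A : Matrix (Fin n) (Fin n) ℝ) (T : Finset (Fin n)) (i : Fin n) : ℝ :=
  ∑ j ∈ T.erase i, A i j

lemma quad_bound {α β c ρ : ℝ} (hc : 0 ≤ c) (h : (ρ - α) * (ρ - β) ≤ c) :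
    ρ ≤ (α + β + Real.sqrt ((α - β) ^ 2 + 4 * c)) / 2 := by
  set s := Real.sqrt ((α - β) ^ 2 + 4 * c) with hs
  have hs0 : 0 ≤ s := Real.sqrt_nonneg _
  have hs2 : s ^ 2 = (α - β) ^ 2 + 4 * c :=
    Real.sq_sqrt (by nlinarith [sq_nonneg (α - β)])
  by_contra hcon
  push_neg at hcon
  nlinarith [mul_pos (show (0:ℝ) < 2 * ρ - α - β - s by linarith)
    (show (0:ℝ) < 2 * ρ - α - β + s by linarith)]

theorem stmt_15 {n : ℕ} (hn : 2 ≤ n) (A : Matrix (Fin n) (Fin n) ℝ)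
    (hA : ∀ i j, 0 ≤ A i j)
    (S : Finset (Fin n)) (hS : S.Nonempty) (hSc : Sᶜ.Nonempty)
    (ρ : ℝ)
    (hρ : IsGreatest {r : ℝ | ∃ μ : ℂ, IsEigOfReal A μ ∧ r = ‖μ‖} ρ)
    (hρeig : IsEigOfReal A (ρ : ℂ)) :
    ρ ≤ max
      (max (S.sup' hS (fun i => A i i + rT A S i))
        (Sᶜ.sup' hSc (fun i => A i i + rT A Sᶜ i)))
      (max
        ((S ×ˢ Sᶜ).sup' (hS.product hSc) (fun p =>
          min ((A p.1 p.1 + A p.2 p.2 + rT A S p.1 + rT A Sᶜ p.2 +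
              Real.sqrt ((A p.1 p.1 - A p.2 p.2 + rT A S p.1 - rT A Sᶜ p.2) ^ 2 +
                4 * rT A Sᶜ p.1 * rT A S p.2)) / 2)
            (A p.1 p.1 + rT A S p.1 + rT A Sᶜ p.1)))
        ((Sᶜ ×ˢ S).sup' (hSc.product hS) (fun p =>
          min ((A p.1 p.1 + A p.2 p.2 + rT A Sᶜ p.1 + rT A S p.2 +
              Real.sqrt ((A p.1 p.1 - A p.2 p.2 + rT A Sᶜ p.1 - rT A S p.2) ^ 2 +
                4 * rT A S p.1 * rT A Sᶜ p.2)) / 2)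
            (A p.1 p.1 + rT A S p.1 + rT A Sᶜ p.1)))) := by
  obtain ⟨v, hv0, hvec⟩ := hρeig
  set f : Fin n → ℝ := fun i => ‖v i‖ with hf
  have hf0 : ∀ i, 0 ≤ f i := fun i => norm_nonneg _
  have hrT : ∀ (T : Finset (Fin n)) i, 0 ≤ rT A T i :=
    fun T i => Finset.sum_nonneg (fun j _ => hA i j)
  obtain ⟨p, hpS, hpmax⟩ := S.exists_max_image f hS
  obtain ⟨q, hqSc, hqmax⟩ := Sᶜ.exists_max_image f hSc
  -- the basic row inequality
  have hrow : ∀ i, (ρ - A i i) * f i ≤ ∑ j ∈ Finset.univ.erase i, A i j * f j := by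
    intro i
    have h1 : ∑ j, (A i j : ℂ) * v j = (ρ : ℂ) * v i := by
      have := congrFun hvec i
      simpa [Matrix.mulVec, Matrix.map_apply, dotProduct] using this
    have h2 : ((ρ : ℂ) - (A i i : ℂ)) * v i
        = ∑ j ∈ Finset.univ.erase i, (A i j : ℂ) * v j := by
      rw [Finset.sum_erase_eq_sub (Finset.mem_univ i), h1]; ring
    calc (ρ - A i i) * f i ≤ |ρ - A i i| * f i :=
          mul_le_mul_of_nonneg_right (le_abs_self _) (hf0 i)
      _ = ‖((ρ : ℂ) - (A i i : ℂ)) * v i‖ := by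
          rw [norm_mul]
          congr 1
          rw [show ((ρ : ℂ) - (A i i : ℂ)) = ((ρ - A i i : ℝ) : ℂ) by push_cast; ring,
            Complex.norm_real, Real.norm_eq_abs]
      _ = ‖∑ j ∈ Finset.univ.erase i, (A i j : ℂ) * v j‖ := by rw [h2]
      _ ≤ ∑ j ∈ Finset.univ.erase i, ‖(A i j : ℂ) * v j‖ :=
          norm_sum_le _ _
      _ = ∑ j ∈ Finset.univ.erase i, A i j * f j := by
          refine Finset.sum_congr rfl fun j _ => ?_
          rw [norm_mul, Complex.norm_real, Real.norm_eq_abs, abs_of_nonneg (hA i j)]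
  have hsplit : ∀ i : Fin n, Finset.univ.erase i = (S.erase i) ∪ (Sᶜ.erase i) := by
    intro i; ext j
    simp only [Finset.mem_erase, Finset.mem_union, Finset.mem_univ, Finset.mem_compl,
      and_true]
    tauto
  have hdisj : ∀ i : Fin n, Disjoint (S.erase i) (Sᶜ.erase i) := fun i =>
    Finset.disjoint_of_subset_left (Finset.erase_subset _ _)
      (Finset.disjoint_of_subset_right (Finset.erase_subset _ _) disjoint_compl_right)
  have key : ∀ i, (ρ - A i i) * f i ≤ rT A S i * f p + rT A Sᶜ i * f q := by
    intro i
    refine (hrow i).trans ?_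
    rw [hsplit i, Finset.sum_union (hdisj i)]
    unfold rT
    rw [Finset.sum_mul, Finset.sum_mul]
    refine add_le_add (Finset.sum_le_sum fun j hj => ?_) (Finset.sum_le_sum fun j hj => ?_)
    · exact mul_le_mul_of_nonneg_left (hpmax j (Finset.mem_of_mem_erase hj)) (hA i j)
    · exact mul_le_mul_of_nonneg_left (hqmax j (Finset.mem_of_mem_erase hj)) (hA i j)
  by_cases hq0 : f q = 0
  · -- eigenvector supported on S
    have hp_pos : 0 < f p := by
      obtain ⟨i, hi⟩ := Function.ne_iff.mp hv0
      have hfi : 0 < f i := by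
        simpa [hf] using norm_pos_iff.mpr hi
      by_cases hiS : i ∈ S
      · exact lt_of_lt_of_le hfi (hpmax i hiS)
      · exact absurd (le_antisymm (hq0 ▸ hqmax i (Finset.mem_compl.mpr hiS)) (hf0 i))
          (ne_of_gt hfi)
    have hk := key p
    rw [hq0, mul_zero, add_zero] at hk
    exact le_max_of_le_left (le_max_of_le_left
      ((show ρ ≤ A p p + rT A S p by nlinarith [hk, hp_pos]).trans
        (Finset.le_sup' (fun i => A i i + rT A S i) hpS)))
  by_cases hp0 : f p = 0
  · have hq_pos : 0 < f q := by
      obtain ⟨i, hi⟩ := Function.ne_iff.mp hv0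
      have hfi : 0 < f i := by
        simpa [hf] using norm_pos_iff.mpr hi
      by_cases hiS : i ∈ S
      · exact absurd (le_antisymm (hp0 ▸ hpmax i hiS) (hf0 i)) (ne_of_gt hfi)
      · exact lt_of_lt_of_le hfi (hqmax i (Finset.mem_compl.mpr hiS))
    have hk := key q
    rw [hp0, mul_zero, zero_add] at hk
    exact le_max_of_le_left (le_max_of_le_right
      ((show ρ ≤ A q q + rT A Sᶜ q by nlinarith [hk, hq_pos]).trans
        (Finset.le_sup' (fun i => A i i + rT A Sᶜ i) hqSc)))
  have hp_pos : 0 < f p := lt_of_le_of_ne (hf0 p) (Ne.symm hp0)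
  have hq_pos : 0 < f q := lt_of_le_of_ne (hf0 q) (Ne.symm hq0)
  by_cases hη1 : ρ ≤ A p p + rT A S p
  · exact le_max_of_le_left (le_max_of_le_left
      (hη1.trans (Finset.le_sup' (fun i => A i i + rT A S i) hpS)))
  by_cases hη2 : ρ ≤ A q q + rT A Sᶜ q
  · exact le_max_of_le_left (le_max_of_le_right
      (hη2.trans (Finset.le_sup' (fun i => A i i + rT A Sᶜ i) hqSc)))
  push_neg at hη1 hη2
  have hkp := key p
  have hkq := key q
  have h1 : (ρ - (A p p + rT A S p)) * f p ≤ rT A Sᶜ p * f q := by nlinarith [hkp]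
  have h2 : (ρ - (A q q + rT A Sᶜ q)) * f q ≤ rT A S q * f p := by nlinarith [hkq]
  have hpq : 0 < f p * f q := mul_pos hp_pos hq_pos
  have hab : (ρ - (A p p + rT A S p)) * (ρ - (A q q + rT A Sᶜ q))
      ≤ rT A Sᶜ p * rT A S q := by
    have h5 : ((ρ - (A p p + rT A S p)) * (ρ - (A q q + rT A Sᶜ q))) * (f p * f q)
        ≤ (rT A Sᶜ p * rT A S q) * (f p * f q) := by
      calc ((ρ - (A p p + rT A S p)) * (ρ - (A q q + rT A Sᶜ q))) * (f p * f q)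
          = ((ρ - (A p p + rT A S p)) * f p) * ((ρ - (A q q + rT A Sᶜ q)) * f q) := by ring
        _ ≤ (rT A Sᶜ p * f q) * (rT A S q * f p) := by
            refine mul_le_mul h1 h2 ?_ ?_
            · exact le_of_lt (mul_pos (by linarith) hq_pos)
            · exact mul_nonneg (hrT _ _) (hf0 q)
        _ = (rT A Sᶜ p * rT A S q) * (f p * f q) := by ring
    exact le_of_mul_le_mul_right h5 hpq
  have hc : (0:ℝ) ≤ rT A Sᶜ p * rT A S q := mul_nonneg (hrT _ _) (hrT _ _)
  rcases le_total (f q) (f p) with hle | hle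
  · -- use η₃ at (p, q)
    have hmem : (p, q) ∈ S ×ˢ Sᶜ := Finset.mem_product.mpr ⟨hpS, hqSc⟩
    refine le_max_of_le_right (le_max_of_le_left ?_)
    apply le_trans _ (Finset.le_sup' _ hmem)
    refine le_min ?_ ?_
    · have h := quad_bound hc hab
      have harg : (A p p - A q q + rT A S p - rT A Sᶜ q) ^ 2 + 4 * rT A Sᶜ p * rT A S q
          = ((A p p + rT A S p) - (A q q + rT A Sᶜ q)) ^ 2 + 4 * (rT A Sᶜ p * rT A S q) := by
        ring
      rw [harg]
      linarith [h]
    · -- ρ ≤ R_p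
      nlinarith [hkp, hp_pos, mul_le_mul_of_nonneg_left hle (hrT Sᶜ p)]
  · -- use η₄ at (q, p)
    have hmem : (q, p) ∈ Sᶜ ×ˢ S := Finset.mem_product.mpr ⟨hqSc, hpS⟩
    refine le_max_of_le_right (le_max_of_le_right ?_)
    apply le_trans _ (Finset.le_sup' _ hmem)
    refine le_min ?_ ?_
    · have hab' : (ρ - (A q q + rT A Sᶜ q)) * (ρ - (A p p + rT A S p))
          ≤ rT A S q * rT A Sᶜ p := by nlinarith [hab]
      have h := quad_bound (mul_nonneg (hrT _ _) (hrT _ _)) hab'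
      have harg : (A q q - A p p + rT A Sᶜ q - rT A S p) ^ 2 + 4 * rT A S q * rT A Sᶜ p
          = ((A q q + rT A Sᶜ q) - (A p p + rT A S p)) ^ 2 + 4 * (rT A S q * rT A Sᶜ p) := by
        ring
      rw [harg]
      linarith [h]
    · -- ρ ≤ R_q
      nlinarith [hkq, hq_pos, mul_le_mul_of_nonneg_left hle (hrT S q)]
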